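/- Let k be a field of characteristic 3, let ε₁ ∈ k, let c₃ ∈ k[t] with deg c₃ ≤ 3 and c₅ ∈ k[t] with deg c₅ ≤ 5. Set b₂ = ε₁t², b₄ = −t·c₃, b₆ = t·c₅, and Δ = −b₂²(b₂b₆ − b₄²) + b₄³. Then there exist σ ∈ k and a polynomial P₆ ∈ k[t] with deg P₆ ≤ 6 such that Δ = t⁶·P₆ − σ³t³. In particular, the coefficients of t⁴ and t⁵ in Δ vanish. -/
import Mathlib


open Polynomial

theorem stmt7 {k : Type*} [Field k] [CharP k 3]
    (ε₁ : k) (c₃ c₅ : k[X]) (hc₃ : c₃.degree ≤ 3) (hc₅ : c₅.degree ≤ 5)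
    (b₂ b₄ b₆ Δ : k[X])
    (hb₂ : b₂ = C ε₁ * X ^ 2) (hb₄ : b₄ = -(X * c₃)) (hb₆ : b₆ = X * c₅)
    (hΔ : Δ = -b₂ ^ 2 * (b₂ * b₆ - b₄ ^ 2) + b₄ ^ 3) :
    ∃ (σ : k) (P₆ : k[X]), P₆.degree ≤ 6 ∧
      Δ = X ^ 6 * P₆ - C σ ^ 3 * X ^ 3 ∧
      Δ.coeff 4 = 0 ∧ Δ.coeff 5 = 0 := by
  haveI : Fact (Nat.Prime 3) := ⟨by norm_num⟩
  set σ := c₃.coeff 0 with hσ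
  have hdvd : X ∣ c₃ - C σ := by
    rw [X_dvd_iff]; simp [hσ]
  obtain ⟨q, hq⟩ := hdvd
  have hqdeg : q.degree ≤ 2 := by
    by_cases hq0 : q = 0
    · simp [hq0]
    · have h1 : (X * q).degree ≤ 3 := by
        rw [← hq]
        exact (degree_sub_le _ _).trans (max_le hc₃ (degree_C_le.trans (by norm_num)))
      rw [degree_mul, degree_X] at h1
      have h2 : (1 : WithBot ℕ) + q.degree ≤ 1 + 2 := by norm_num; exact h1
      exact (WithBot.add_le_add_iff_left (by simp)).mp h2
  have hc3' : c₃ = X * q + C σ := by linear_combination hq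
  have hc3cube : c₃ ^ 3 = X ^ 3 * q ^ 3 + C σ ^ 3 := by
    rw [hc3', add_pow_char (p := 3), mul_pow]
  have key : Δ = X ^ 6 * (C ε₁ ^ 2 * c₃ ^ 2 - C ε₁ ^ 3 * X * c₅ - q ^ 3) - C σ ^ 3 * X ^ 3 := by
    subst hb₂ hb₄ hb₆ hΔ
    linear_combination (-(X : k[X]) ^ 3) * hc3cube
  refine ⟨σ, C ε₁ ^ 2 * c₃ ^ 2 - C ε₁ ^ 3 * X * c₅ - q ^ 3, ?_, key, ?_, ?_⟩
  · refine (degree_sub_le _ _).trans (max_le ((degree_sub_le _ _).trans (max_le ?_ ?_)) ?_)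
    · refine (degree_mul_le _ _).trans ?_
      have h1 : (C ε₁ ^ 2).degree ≤ 0 := by rw [← C_pow]; exact degree_C_le
      have h2 : (c₃ ^ 2).degree ≤ 6 := (degree_pow_le _ _).trans (by
        calc (2 : ℕ) • c₃.degree ≤ (2:ℕ) • (3 : WithBot ℕ) := nsmul_le_nsmul_right hc₃ 2
        _ = 6 := by rfl)
      calc (C ε₁ ^ 2).degree + (c₃ ^ 2).degree ≤ 0 + 6 := add_le_add h1 h2
      _ = 6 := by rfl
    · refine (degree_mul_le _ _).trans ?_
      have h1 : (C ε₁ ^ 3 * X).degree ≤ 1 := (degree_mul_le _ _).trans (by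
        have h0 : (C ε₁ ^ 3).degree ≤ 0 := by rw [← C_pow]; exact degree_C_le
        calc (C ε₁ ^ 3).degree + X.degree ≤ 0 + 1 := add_le_add h0 (by rw [degree_X])
        _ = 1 := by rfl)
      calc (C ε₁ ^ 3 * X).degree + c₅.degree ≤ 1 + 5 := add_le_add h1 hc₅
      _ = 6 := by rfl
    · refine (degree_pow_le _ _).trans ?_
      calc (3 : ℕ) • q.degree ≤ (3:ℕ) • (2 : WithBot ℕ) := nsmul_le_nsmul_right hqdeg 3
      _ = 6 := by rfl
  · rw [key, mul_comm (X ^ 6 : k[X])]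
    simp only [coeff_sub, coeff_mul_X_pow', ← C_pow, coeff_C]
    norm_num
  · rw [key, mul_comm (X ^ 6 : k[X])]
    simp only [coeff_sub, coeff_mul_X_pow', ← C_pow, coeff_C]
    norm_num
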